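/- The ten MUB unit vectors v₁,…,v₁₀ in ℍ² form a spherical (3,3)-design: Σⱼ Σₖ |⟨vⱼ,vₖ⟩|⁶ = c₃(ℍ²)·100, where c₃(ℍ²) = 6/(2·5·3) = 1/5; equivalently Σⱼ Σₖ |⟨vⱼ,vₖ⟩|⁶ = 20. -/

import Mathlib

noncomputable section
open Quaternion Matrix

abbrev HQ := ℍ[ℝ]
def qi : HQ := ⟨0,1,0,0⟩
def qj : HQ := ⟨0,0,1,0⟩
def qk : HQ := ⟨0,0,0,1⟩

/-- Inner product on the right ℍ-module ℍ^d. -/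
def inprod {d : ℕ} (v w : Fin d → HQ) : HQ := ∑ m, star (v m) * w m


/-- The ten MUB unit vectors e₁, e₂, (1/√2)(1,q), q ∈ {±1,±i,±j,±k}. -/
def mubUnit : Fin 10 → (Fin 2 → HQ) :=
  ![![1, 0], ![0, 1],
    (Real.sqrt 2)⁻¹ • ![1, 1], (Real.sqrt 2)⁻¹ • ![1, -1],
    (Real.sqrt 2)⁻¹ • ![1, qi], (Real.sqrt 2)⁻¹ • ![1, -qi],
    (Real.sqrt 2)⁻¹ • ![1, qj], (Real.sqrt 2)⁻¹ • ![1, -qj],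
    (Real.sqrt 2)⁻¹ • ![1, qk], (Real.sqrt 2)⁻¹ • ![1, -qk]]

set_option maxHeartbeats 2000000 in
/-- The ten MUB unit vectors form a spherical (3,3)-design for ℍ²:
Σⱼₖ |⟨vⱼ,vₖ⟩|⁶ = c₃(ℍ²)·10² = (1/5)·100 = 20. -/
theorem MUBs_are_spherical_33_design :
    ∑ a : Fin 10, ∑ b : Fin 10,
      (Quaternion.normSq (inprod (mubUnit a) (mubUnit b))) ^ 3 = 20 := by
  have h2 : Real.sqrt 2 * Real.sqrt 2 = 2 := Real.mul_self_sqrt (by norm_num)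
  have hqi : qi.re = 0 ∧ qi.imI = 1 ∧ qi.imJ = 0 ∧ qi.imK = 0 := ⟨rfl, rfl, rfl, rfl⟩
  have hqj : qj.re = 0 ∧ qj.imI = 0 ∧ qj.imJ = 1 ∧ qj.imK = 0 := ⟨rfl, rfl, rfl, rfl⟩
  have hqk : qk.re = 0 ∧ qk.imI = 0 ∧ qk.imJ = 0 ∧ qk.imK = 1 := ⟨rfl, rfl, rfl, rfl⟩
  simp only [mubUnit, inprod, Fin.sum_univ_succ, Fin.sum_univ_zero,
    Fin.sum_univ_two, Matrix.cons_val_zero, Matrix.cons_val_one, Matrix.head_cons,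
    Matrix.cons_val_succ, Pi.smul_apply, Quaternion.normSq_def', Quaternion.ext_iff,
    smul_mul_assoc, mul_smul_comm, Quaternion.star_smul, star_one, one_mul, mul_one, star_star]
  simp only [Quaternion.re_smul, Quaternion.imI_smul, Quaternion.imJ_smul, Quaternion.imK_smul,
    Quaternion.re_mul, Quaternion.imI_mul, Quaternion.imJ_mul, Quaternion.imK_mul,
    Quaternion.re_star, Quaternion.imI_star, Quaternion.imJ_star, Quaternion.imK_star,
    Quaternion.re_add, Quaternion.imI_add, Quaternion.imJ_add, Quaternion.imK_add,
    Quaternion.re_neg, Quaternion.imI_neg, Quaternion.imJ_neg, Quaternion.imK_neg,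
    Quaternion.re_one, Quaternion.imI_one, Quaternion.imJ_one, Quaternion.imK_one,
    Quaternion.re_zero, Quaternion.imI_zero, Quaternion.imJ_zero, Quaternion.imK_zero,
    smul_eq_mul, Matrix.cons_val, hqi, hqj, hqk]
  ring_nf
  rw [show (Real.sqrt 2)⁻¹ = 1 / Real.sqrt 2 by ring]
  field_simp
  have h6 : Real.sqrt 2 ^ 6 = 8 := by
    calc Real.sqrt 2 ^ 6 = (Real.sqrt 2 * Real.sqrt 2)^3 := by ring
    _ = 8 := by rw [h2]; norm_num
  have h12 : Real.sqrt 2 ^ 12 = 64 := by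
    calc Real.sqrt 2 ^ 12 = (Real.sqrt 2 * Real.sqrt 2)^6 := by ring
    _ = 64 := by rw [h2]; norm_num
  simp only [h6, h12]
  norm_num
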